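/- Let Q be a finite (left) quasifield with q elements and let A ⊆ Q\{0}. Setting z = |A·(A+A)|, where A·(A+A) = {a·(b+c) : a,b,c ∈ A}, one has q·|A|^{3/2} ≤ |A|^{3/2}·z + q^{3/2}·√z. (In particular |A·(A+A)| ≥ c·min{q, |A|³/q} for an absolute constant c > 0.) -/

import Mathlib

/-- A finite (left) quasifield. -/
class Quasifield (Q : Type*) extends AddCommGroup Q, Mul Q, One Q where
  one_ne_zero : (1 : Q) ≠ 0
  one_mul : ∀ a : Q, 1 * a = a
  mul_one : ∀ a : Q, a * 1 = a
  zero_mul : ∀ a : Q, 0 * a = 0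
  mul_zero : ∀ a : Q, a * 0 = 0
  mul_ne_zero : ∀ a b : Q, a ≠ 0 → b ≠ 0 → a * b ≠ 0
  existsUnique_mul_left : ∀ a b : Q, a ≠ 0 → b ≠ 0 → ∃! x : Q, a * x = b
  existsUnique_mul_right : ∀ a b : Q, a ≠ 0 → b ≠ 0 → ∃! y : Q, y * a = b
  left_distrib : ∀ a b c : Q, a * (b + c) = a * b + a * c
  existsUnique_affine : ∀ a b c : Q, a ≠ b → ∃! x : Q, a * x = b * x + c

/-- The kernel of a quasifield. -/
def Quasifield.kernel (Q : Type*) [Quasifield Q] : Set Q :=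
  {k | (∀ x y : Q, (x + y) * k = x * k + y * k) ∧ ∀ x y : Q, (x * y) * k = x * (y * k)}

open scoped Pointwise

namespace QfAux

variable {Q : Type*} [Quasifield Q]

lemma mul_left_cancel' {a : Q} (ha : a ≠ 0) {x y : Q} (h : a * x = a * y) : x = y := by
  rcases eq_or_ne x 0 with rfl | hx
  · rcases eq_or_ne y 0 with rfl | hy
    · rfl
    · exfalso
      apply Quasifield.mul_ne_zero a y ha hy
      rw [← h, Quasifield.mul_zero]
  · rcases eq_or_ne y 0 with rfl | hy
    · exfalso
      apply Quasifield.mul_ne_zero a x ha hx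
      rw [h, Quasifield.mul_zero]
    · obtain ⟨u, _, huniq⟩ :=
        Quasifield.existsUnique_mul_left a (a * y) ha (Quasifield.mul_ne_zero a y ha hy)
      exact (huniq x h).trans (huniq y rfl).symm

lemma slope_inj {x₁ x₂ : Q} (hx : x₁ ≠ x₂) {a b : Q}
    (h : a * x₁ - a * x₂ = b * x₁ - b * x₂) : a = b := by
  by_contra hne
  have h' : a * x₁ - b * x₁ = a * x₂ - b * x₂ := sub_eq_sub_iff_sub_eq_sub.mp h
  have h1 : a * x₁ = b * x₁ + (a * x₂ - b * x₂) := by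
    rw [← h']; abel
  have h2 : a * x₂ = b * x₂ + (a * x₂ - b * x₂) := by abel
  obtain ⟨w, _, huniq⟩ := Quasifield.existsUnique_affine a b (a * x₂ - b * x₂) hne
  exact hx ((huniq x₁ h1).trans (huniq x₂ h2).symm)

variable [Fintype Q] [DecidableEq Q]

lemma lines_through_point (p : Q × Q) :
    (Finset.univ.filter fun l : Q × Q => p.2 = l.1 * p.1 + l.2).card = Fintype.card Q := by
  have himg : (Finset.univ.filter fun l : Q × Q => p.2 = l.1 * p.1 + l.2)
      = Finset.univ.image (fun a : Q => (a, p.2 - a * p.1)) := by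
    ext l
    simp only [Finset.mem_filter, Finset.mem_univ, true_and, Finset.mem_image]
    constructor
    · intro h
      refine ⟨l.1, ?_⟩
      have : p.2 - l.1 * p.1 = l.2 := by rw [h]; abel
      rw [this]
    · rintro ⟨a, rfl⟩
      simp
  rw [himg, Finset.card_image_of_injective _ (fun a b hab => (Prod.ext_iff.mp hab).1),
    Finset.card_univ]

lemma lines_through_two_le_one {p p' : Q × Q} (hpp : p ≠ p') :
    (Finset.univ.filter
      fun l : Q × Q => p.2 = l.1 * p.1 + l.2 ∧ p'.2 = l.1 * p'.1 + l.2).card ≤ 1 := by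
  apply Finset.card_le_one.mpr
  intro l hl l' hl'
  simp only [Finset.mem_filter, Finset.mem_univ, true_and] at hl hl'
  rcases eq_or_ne p.1 p'.1 with h1 | h1
  · exfalso
    apply hpp
    have : p.2 = p'.2 := by rw [hl.1, hl.2, h1]
    exact Prod.ext h1 this
  · have key : ∀ l₀ : Q × Q, p.2 = l₀.1 * p.1 + l₀.2 → p'.2 = l₀.1 * p'.1 + l₀.2 →
        l₀.1 * p.1 - l₀.1 * p'.1 = p.2 - p'.2 := by
      intro l₀ e1 e2
      rw [e1, e2]; abel
    have hslope : l.1 = l'.1 :=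
      slope_inj h1 ((key l hl.1 hl.2).trans (key l' hl'.1 hl'.2).symm)
    have hint : l.2 = l'.2 := by
      have := hl.1
      rw [hl'.1, hslope] at this
      exact add_left_cancel this.symm
    exact Prod.ext hslope hint

/-- Number of points of `P` on the line `y = l.1 * x + l.2`. -/
def lineCount (P : Finset (Q × Q)) (l : Q × Q) : ℕ :=
  (P.filter fun p => p.2 = l.1 * p.1 + l.2).card

lemma sum_lineCount (P : Finset (Q × Q)) :
    ∑ l : Q × Q, lineCount P l = P.card * Fintype.card Q := by
  calc ∑ l : Q × Q, lineCount P l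
      = ∑ l : Q × Q, ∑ p ∈ P, if p.2 = l.1 * p.1 + l.2 then 1 else 0 := by
        simp only [lineCount, Finset.card_filter]
    _ = ∑ p ∈ P, ∑ l : Q × Q, if p.2 = l.1 * p.1 + l.2 then 1 else 0 := Finset.sum_comm
    _ = ∑ p ∈ P, (Finset.univ.filter fun l : Q × Q => p.2 = l.1 * p.1 + l.2).card := by
        simp only [Finset.card_filter]
    _ = ∑ _p ∈ P, Fintype.card Q := Finset.sum_congr rfl fun p _ => lines_through_point p
    _ = P.card * Fintype.card Q := by simp [mul_comm]

lemma sum_lineCount_sq (P : Finset (Q × Q)) :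
    ∑ l : Q × Q, (lineCount P l) ^ 2 ≤ P.card * Fintype.card Q + P.card ^ 2 := by
  have hsq : ∀ l : Q × Q, (lineCount P l) ^ 2 =
      ((P ×ˢ P).filter fun pp =>
        pp.1.2 = l.1 * pp.1.1 + l.2 ∧ pp.2.2 = l.1 * pp.2.1 + l.2).card := by
    intro l
    rw [sq, lineCount, ← Finset.card_product]
    congr 1
    ext pp
    simp only [Finset.mem_product, Finset.mem_filter]
    tauto
  calc ∑ l : Q × Q, (lineCount P l) ^ 2
      = ∑ l : Q × Q, ∑ pp ∈ P ×ˢ P,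
          if (pp.1.2 = l.1 * pp.1.1 + l.2 ∧ pp.2.2 = l.1 * pp.2.1 + l.2) then 1 else 0 := by
        refine Finset.sum_congr rfl fun l _ => ?_
        rw [hsq l, Finset.card_filter]
    _ = ∑ pp ∈ P ×ˢ P, ∑ l : Q × Q,
          if (pp.1.2 = l.1 * pp.1.1 + l.2 ∧ pp.2.2 = l.1 * pp.2.1 + l.2) then 1 else 0 :=
        Finset.sum_comm
    _ = ∑ pp ∈ P ×ˢ P, (Finset.univ.filter fun l : Q × Q =>
          pp.1.2 = l.1 * pp.1.1 + l.2 ∧ pp.2.2 = l.1 * pp.2.1 + l.2).card := by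
        simp only [Finset.card_filter]
    _ ≤ ∑ pp ∈ P ×ˢ P, (if pp.1 = pp.2 then Fintype.card Q else 1) := by
        apply Finset.sum_le_sum
        intro pp _
        rcases eq_or_ne pp.1 pp.2 with h | h
        · rw [if_pos h]
          refine le_trans (Finset.card_le_card ?_) (le_of_eq (lines_through_point pp.1))
          intro l hl
          simp only [Finset.mem_filter, Finset.mem_univ, true_and] at hl ⊢
          exact hl.1
        · rw [if_neg h]
          exact lines_through_two_le_one h
    _ ≤ P.card * Fintype.card Q + P.card ^ 2 := by
        rw [Finset.sum_ite]
        gcongr ?_ + ?_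
        · rw [Finset.sum_const, smul_eq_mul]
          gcongr
          apply Finset.card_le_card_of_injOn (fun pp => pp.1)
          · intro pp hpp
            simp only [Finset.coe_filter, Set.mem_setOf_eq, Finset.mem_coe, Finset.mem_filter, Finset.mem_product] at hpp
            exact hpp.1.1
          · intro pp hpp qq hqq h
            simp only [Finset.coe_filter, Set.mem_setOf_eq, Finset.mem_product] at hpp hqq
            have h' : pp.1 = qq.1 := h
            exact Prod.ext h' ((hpp.2.symm.trans h').trans hqq.2)
        · rw [Finset.sum_const, smul_eq_mul, mul_one]
          refine le_trans (Finset.card_le_card (Finset.filter_subset _ _)) ?_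
          rw [Finset.card_product, sq]

omit [Fintype Q] in
lemma card_lines (A' : Finset Q) (hA0 : ∀ a ∈ A', a ≠ 0) :
    ((A' ×ˢ A').image (fun ac : Q × Q => (ac.1, ac.1 * ac.2))).card = A'.card ^ 2 := by
  rw [Finset.card_image_of_injOn, Finset.card_product, sq]
  intro x hx y hy h
  simp only [Finset.coe_product, Set.mem_prod, Finset.mem_coe] at hx hy
  simp only [Prod.mk.injEq] at h
  obtain ⟨h1, h2⟩ := h
  rw [← h1] at h2
  exact Prod.ext h1 (mul_left_cancel' (hA0 x.1 hx.1) h2)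

omit [Fintype Q] in
lemma incidence_lower (A' Z' : Finset Q)
    (hA0 : ∀ a ∈ A', a ≠ 0)
    (hmem : ∀ a ∈ A', ∀ b ∈ A', ∀ c ∈ A', a * (b + c) ∈ Z') :
    A'.card ^ 3 ≤ ∑ l ∈ (A' ×ˢ A').image (fun ac : Q × Q => (ac.1, ac.1 * ac.2)),
      lineCount (A' ×ˢ Z') l := by
  set L := (A' ×ˢ A').image (fun ac : Q × Q => (ac.1, ac.1 * ac.2)) with hL
  set P := A' ×ˢ Z' with hP
  have hcard : ((L ×ˢ P).filter fun lp : (Q × Q) × Q × Q =>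
      lp.2.2 = lp.1.1 * lp.2.1 + lp.1.2).card = ∑ l ∈ L, lineCount P l := by
    rw [Finset.card_filter, Finset.sum_product]
    simp only [lineCount, Finset.card_filter]
  rw [← hcard]
  have hc3 : A'.card ^ 3 = (A' ×ˢ (A' ×ˢ A')).card := by
    rw [Finset.card_product, Finset.card_product]; ring
  rw [hc3]
  apply Finset.card_le_card_of_injOn
    (fun t : Q × Q × Q => ((t.1, t.1 * t.2.2), (t.2.1, t.1 * (t.2.1 + t.2.2))))
  · intro t ht
    simp only [Finset.mem_coe, Finset.mem_product] at ht
    obtain ⟨ha, hb, hc⟩ := ht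
    refine Finset.mem_filter.mpr ⟨Finset.mem_product.mpr ⟨?_, ?_⟩, ?_⟩
    · exact Finset.mem_image.mpr ⟨(t.1, t.2.2), Finset.mem_product.mpr ⟨ha, hc⟩, rfl⟩
    · exact Finset.mem_product.mpr ⟨hb, hmem t.1 ha t.2.1 hb t.2.2 hc⟩
    · exact Quasifield.left_distrib t.1 t.2.1 t.2.2
  · intro t ht t' ht' h
    simp only [Finset.coe_product, Set.mem_prod, Finset.mem_coe] at ht ht'
    simp only [Prod.mk.injEq] at h
    obtain ⟨⟨h1, h2⟩, hb, -⟩ := h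
    have hc : t.2.2 = t'.2.2 := by
      rw [← h1] at h2
      exact mul_left_cancel' (hA0 t.1 ht.1) h2
    exact Prod.ext h1 (Prod.ext hb hc)

end QfAux


set_option maxHeartbeats 1000000 in
open QfAux in
/-- Corollary 1.6 (key inequality): for `A ⊆ Q \ {0}` and
`z = |A·(A+A)|`, one has `q·|A|^{3/2} ≤ |A|^{3/2}·z + q^{3/2}·√z`. -/
theorem stmt_3 {Q : Type*} [Quasifield Q] [Fintype Q]
    (A : Set Q) (hA0 : ∀ a ∈ A, a ≠ 0) (z : ℕ)
    (hz : z = Set.ncard {x : Q | ∃ a ∈ A, ∃ b ∈ A, ∃ c ∈ A, x = a * (b + c)}) :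
    (Fintype.card Q : ℝ) * (A.ncard : ℝ) ^ ((3 : ℝ) / 2) ≤
      (A.ncard : ℝ) ^ ((3 : ℝ) / 2) * z +
        (Fintype.card Q : ℝ) ^ ((3 : ℝ) / 2) * Real.sqrt z := by
  classical
  have r32 : ∀ m : ℕ, ((m : ℝ)) ^ ((3 : ℝ) / 2) = (m : ℝ) * Real.sqrt m := by
    intro m
    have h0 : (0:ℝ) ≤ m := Nat.cast_nonneg m
    rw [show (3:ℝ)/2 = 1 + 1/2 by norm_num, Real.rpow_add' h0 (by norm_num), Real.rpow_one,
      Real.sqrt_eq_rpow]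
  -- Finsets
  have hAfin : A.Finite := Set.toFinite A
  set A' : Finset Q := hAfin.toFinset with hA'
  set S : Set Q := {x : Q | ∃ a ∈ A, ∃ b ∈ A, ∃ c ∈ A, x = a * (b + c)} with hSdef
  have hSfin : S.Finite := Set.toFinite S
  set Z' : Finset Q := hSfin.toFinset with hZ'
  have hncard : A.ncard = A'.card := Set.ncard_eq_toFinset_card A hAfin
  have hzc : z = Z'.card := by rw [hz]; exact Set.ncard_eq_toFinset_card S hSfin
  set n := A'.card with hn
  set zc := Z'.card with hzcc
  set q := Fintype.card Q with hq
  rw [hncard, hzc, r32, r32]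
  rcases Nat.eq_zero_or_pos n with hn0 | hn0
  · rw [hn0]
    simp only [Nat.cast_zero, Real.sqrt_zero, mul_zero, zero_mul, zero_add]
    positivity
  -- main case
  have hQne : Nonempty Q := ⟨0⟩
  have hq0 : 0 < q := Fintype.card_pos
  have hA0' : ∀ a ∈ A', a ≠ 0 := fun a ha => hA0 a (hAfin.mem_toFinset.mp ha)
  have hmem : ∀ a ∈ A', ∀ b ∈ A', ∀ c ∈ A', a * (b + c) ∈ Z' := by
    intro a ha b hb c hc
    refine hSfin.mem_toFinset.mpr ?_
    exact ⟨a, hAfin.mem_toFinset.mp ha, b, hAfin.mem_toFinset.mp hb,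
      c, hAfin.mem_toFinset.mp hc, rfl⟩
  set P : Finset (Q × Q) := A' ×ˢ Z' with hP
  set L : Finset (Q × Q) := (A' ×ˢ A').image (fun ac : Q × Q => (ac.1, ac.1 * ac.2)) with hL
  set N : Q × Q → ℕ := lineCount P with hN
  have hS1 : ∑ l : Q × Q, N l = P.card * q := sum_lineCount P
  have hS2 : ∑ l : Q × Q, (N l) ^ 2 ≤ P.card * q + P.card ^ 2 := sum_lineCount_sq P
  have hI : n ^ 3 ≤ ∑ l ∈ L, N l := incidence_lower A' Z' hA0' hmem
  have hLc : L.card = n ^ 2 := card_lines A' hA0'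
  have hPc : P.card = n * zc := Finset.card_product A' Z'
  -- real numbers
  set μ : ℝ := (P.card : ℝ) / q with hμ
  have hqR : (0:ℝ) < q := by exact_mod_cast hq0
  have hvar : ∑ l : Q × Q, ((N l : ℝ) - μ) ^ 2 ≤ (q : ℝ) * P.card := by
    have hcardQQ : (Finset.univ : Finset (Q × Q)).card = q * q := by
      simp [Finset.card_univ, hq]
    have expand : ∑ l : Q × Q, ((N l : ℝ) - μ) ^ 2
        = (∑ l : Q × Q, ((N l : ℝ)) ^ 2) - 2 * μ * (∑ l : Q × Q, (N l : ℝ))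
          + ((q : ℝ) * q) * μ ^ 2 := by
      calc ∑ l : Q × Q, ((N l : ℝ) - μ) ^ 2
          = ∑ l : Q × Q, (((N l : ℝ)) ^ 2 - 2 * μ * (N l : ℝ) + μ ^ 2) :=
            Finset.sum_congr rfl fun l _ => by ring
        _ = ((∑ l : Q × Q, ((N l : ℝ)) ^ 2) - ∑ l : Q × Q, 2 * μ * (N l : ℝ))
              + (Finset.univ : Finset (Q × Q)).card * μ ^ 2 := by
            rw [Finset.sum_add_distrib, Finset.sum_sub_distrib, Finset.sum_const, nsmul_eq_mul]
        _ = _ := by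
            rw [hcardQQ, ← Finset.mul_sum]
            push_cast
            ring
    rw [expand]
    have hsum1 : (∑ l : Q × Q, ((N l : ℝ))) = (P.card : ℝ) * q := by
      exact_mod_cast congrArg (Nat.cast : ℕ → ℝ) hS1
    have hsum2 : (∑ l : Q × Q, ((N l : ℝ)) ^ 2) ≤ (P.card : ℝ) * q + (P.card : ℝ) ^ 2 := by
      exact_mod_cast hS2
    rw [hsum1]
    have h2 : 2 * μ * ((P.card : ℝ) * q) = 2 * (P.card : ℝ)^2 := by
      rw [hμ]; field_simp
    have h3 : ((q : ℝ) * q) * μ ^ 2 = (P.card : ℝ)^2 := by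
      rw [hμ]; field_simp
    rw [h2, h3]
    nlinarith [hsum2]
  -- Cauchy-Schwarz
  have hCS : (∑ l ∈ L, ((N l : ℝ) - μ)) ^ 2 ≤ (L.card : ℝ) * ((q : ℝ) * P.card) := by
    refine le_trans sq_sum_le_card_mul_sum_sq ?_
    gcongr
    refine le_trans (Finset.sum_le_sum_of_subset_of_nonneg (Finset.subset_univ L)
      (fun l _ _ => sq_nonneg _)) hvar
  have hsub : (∑ l ∈ L, ((N l : ℝ) - μ)) ≤ Real.sqrt ((L.card : ℝ) * ((q : ℝ) * P.card)) := by
    calc (∑ l ∈ L, ((N l : ℝ) - μ)) ≤ |∑ l ∈ L, ((N l : ℝ) - μ)| := le_abs_self _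
      _ = Real.sqrt ((∑ l ∈ L, ((N l : ℝ) - μ)) ^ 2) := (Real.sqrt_sq_eq_abs _).symm
      _ ≤ _ := Real.sqrt_le_sqrt hCS
  have hIL : ((n : ℝ)) ^ 3 ≤ ∑ l ∈ L, ((N l : ℝ)) := by
    calc ((n : ℝ)) ^ 3 = ((n ^ 3 : ℕ) : ℝ) := by push_cast; ring
      _ ≤ ((∑ l ∈ L, N l : ℕ) : ℝ) := by exact_mod_cast hI
      _ = ∑ l ∈ L, ((N l : ℝ)) := by push_cast; rfl
  have hmain : ((n : ℝ)) ^ 3 ≤ Real.sqrt ((L.card : ℝ) * ((q : ℝ) * P.card))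
      + (L.card : ℝ) * μ := by
    have hsplit : (∑ l ∈ L, ((N l : ℝ))) = (∑ l ∈ L, ((N l : ℝ) - μ)) + (L.card : ℝ) * μ := by
      rw [Finset.sum_sub_distrib, Finset.sum_const, nsmul_eq_mul]
      ring
    calc ((n : ℝ)) ^ 3 ≤ ∑ l ∈ L, ((N l : ℝ)) := hIL
      _ = (∑ l ∈ L, ((N l : ℝ) - μ)) + (L.card : ℝ) * μ := hsplit
      _ ≤ _ := by gcongr
  -- rewrite cardinalities and clean up casts
  rw [hLc, hPc, hμ, hPc] at hmain
  push_cast at hmain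
  -- hmain : (n:ℝ)^3 ≤ √((n:ℝ)^2 * ((q:ℝ) * ((n:ℝ)*(zc:ℝ)))) + (n:ℝ)^2 * ((n:ℝ)*(zc:ℝ)/(q:ℝ))
  have hnR0 : (0:ℝ) < (n : ℝ) := by exact_mod_cast hn0
  have hzR0 : (0:ℝ) ≤ (zc : ℝ) := Nat.cast_nonneg zc
  have hsqrt : Real.sqrt ((n : ℝ) ^ 2 * ((q : ℝ) * ((n : ℝ) * (zc : ℝ))))
      = (n : ℝ) * (Real.sqrt q * (Real.sqrt n * Real.sqrt zc)) := by
    rw [Real.sqrt_mul (by positivity), Real.sqrt_sq hnR0.le,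
      Real.sqrt_mul hqR.le, Real.sqrt_mul hnR0.le]
  have hkey : (q : ℝ) * (n : ℝ) ^ 3 ≤ (n : ℝ) ^ 3 * (zc : ℝ)
      + (q : ℝ) * ((n : ℝ) * (Real.sqrt q * (Real.sqrt n * Real.sqrt zc))) := by
    have hstep := mul_le_mul_of_nonneg_left hmain hqR.le
    rw [hsqrt] at hstep
    refine hstep.trans (le_of_eq ?_)
    rw [mul_add]
    have : (q : ℝ) * ((n:ℝ)^2 * ((n:ℝ) * (zc:ℝ) / (q:ℝ))) = (n:ℝ)^3 * (zc:ℝ) := by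
      field_simp
    rw [this]
    ring
  -- final algebra with square roots
  set sn : ℝ := Real.sqrt n with hsn
  set sq' : ℝ := Real.sqrt q with hsq'
  set sz : ℝ := Real.sqrt zc with hsz
  have hsn2 : sn * sn = (n : ℝ) := Real.mul_self_sqrt hnR0.le
  have hsq2 : sq' * sq' = (q : ℝ) := Real.mul_self_sqrt hqR.le
  have hsz2 : sz * sz = (zc : ℝ) := Real.mul_self_sqrt hzR0
  have hsn0 : 0 < sn := Real.sqrt_pos.mpr hnR0
  have hsq0 : 0 < sq' := Real.sqrt_pos.mpr hqR
  have hsz0 : 0 ≤ sz := Real.sqrt_nonneg _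
  rw [← hsn2, ← hsq2, ← hsz2] at hkey ⊢
  refine le_of_mul_le_mul_right ?_ (mul_pos hsn0 (mul_pos hsn0 hsn0))
  calc sq' * sq' * (sn * sn * sn) * (sn * (sn * sn))
      = sq' * sq' * (sn * sn) ^ 3 := by ring
    _ ≤ (sn * sn) ^ 3 * (sz * sz) + sq' * sq' * (sn * sn * (sq' * (sn * sz))) := hkey
    _ = (sn * sn * sn * (sz * sz) + sq' * sq' * sq' * sz) * (sn * (sn * sn)) := by ring
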